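/- Suppose 0 ≤ β_a < β_u < δ < β and α_i > 0. Then f₁(0,u) = (α_i·β_u·(β−β_u)/β²)·u² − (α_i·(β·β_u + β·δ − 2·β_u·δ)/β²)·u + α_i·δ·(β−δ)/β² for all u, and f₁(0,u) > 0 for every u ∈ [0, (β−δ)/(β−β_u)) while f₁(0, (β−δ)/(β−β_u)) = 0. -/

import Mathlib

/-- with f₁(a,u) the a-equation right-hand side (ε = 0) evaluated on the
endemic-equilibrium plane i = i(a,u) := (β − δ − (β−β_a)a − (β−β_u)u)/β, one has
f₁(0,u) = (α_i β_u (β−β_u)/β²)u² − (α_i(ββ_u + βδ − 2β_u δ)/β²)u + α_i δ(β−δ)/β²,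
with f₁(0,u) > 0 on [0, (β−δ)/(β−β_u)) and f₁(0,(β−δ)/(β−β_u)) = 0. -/
theorem sauis_f1_on_axis
    (β βa βu αi αa δ δa η m : ℝ)
    (hβa0 : 0 ≤ βa) (hβaβu : βa < βu) (hβuδ : βu < δ) (hδβ : δ < β)
    (hαi : 0 < αi) (hη : 0 < η) (hm : 1 ≤ m) :
    let iplane : ℝ → ℝ → ℝ := fun a u => (β - δ - (β - βa) * a - (β - βu) * u) / β
    let f1 : ℝ → ℝ → ℝ := fun a u =>
      αi * (1 - a - u - iplane a u) * iplane a u + αa * (1 - a - u - iplane a u) * a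
        - βa * a * iplane a u - δa * (1 / (1 + (iplane a u / η) ^ m)) * a
    (∀ u : ℝ, f1 0 u =
        (αi * βu * (β - βu) / β ^ 2) * u ^ 2
          - (αi * (β * βu + β * δ - 2 * βu * δ) / β ^ 2) * u
          + αi * δ * (β - δ) / β ^ 2) ∧
    (∀ u : ℝ, 0 ≤ u → u < (β - δ) / (β - βu) → 0 < f1 0 u) ∧
    f1 0 ((β - δ) / (β - βu)) = 0 := by
  intro iplane f1
  have hβ : (0:ℝ) < β := lt_trans (lt_trans (lt_of_le_of_lt hβa0 hβaβu) hβuδ) hδβ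
  have hβne : β ≠ 0 := ne_of_gt hβ
  have hbu : (0:ℝ) < β - βu := by linarith
  have hfact : ∀ u : ℝ, f1 0 u = αi * ((δ - βu * u) / β) * ((β - δ - (β - βu) * u) / β) := by
    intro u
    show αi * (1 - 0 - u - iplane 0 u) * iplane 0 u + αa * (1 - 0 - u - iplane 0 u) * 0
        - βa * 0 * iplane 0 u - δa * (1 / (1 + (iplane 0 u / η) ^ m)) * 0
      = αi * ((δ - βu * u) / β) * ((β - δ - (β - βu) * u) / β)
    simp only [mul_zero, zero_mul, sub_zero, iplane]
    field_simp
    ring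
  refine ⟨?_, ?_, ?_⟩
  · intro u
    rw [hfact u]
    field_simp
    ring
  · intro u hu0 hu
    rw [hfact u]
    have h1 : 0 < β - δ - (β - βu) * u := by
      have := (lt_div_iff₀ hbu).mp hu
      linarith [mul_comm u (β - βu)]
    have h2 : 0 < δ - βu * u := by
      have hβu0 : 0 ≤ βu := le_of_lt (lt_of_le_of_lt hβa0 hβaβu)
      have : βu * u * (β - βu) ≤ δ * (β - βu) := by
        nlinarith
      nlinarith
    positivity
  · rw [hfact]
    have : β - δ - (β - βu) * ((β - δ) / (β - βu)) = 0 := by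
      field_simp
      ring
    rw [this]
    simp
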